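/- For Rule 38 on a ring of size n ≥ 2, the all-zeros configuration 0^n is the unique parallel fixed point, and it is isolated under single-cell updates: no non-zero configuration can reach 0^n because any single-cell update of a configuration containing at least one 1 results in a configuration still containing at least one 1. -/
import Mathlib


/-- Single-cell update: replace the state of cell `i` by the local rule applied
to its neighborhood on the ring `ZMod n`. -/
def eupdate (n : ℕ) (f : Bool → Bool → Bool → Bool) (x : ZMod n → Bool) (i : ZMod n) :
    ZMod n → Bool :=
  Function.update x i (f (x (i - 1)) (x i) (x (i + 1)))

/-- Synchronous (parallel) step. -/
def parStep (n : ℕ) (f : Bool → Bool → Bool → Bool) (x : ZMod n → Bool) : ZMod n → Bool :=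
  fun i => f (x (i - 1)) (x i) (x (i + 1))

/-- `x` is a fixed point of the parallel dynamics. -/
def IsFixedConfig (n : ℕ) (f : Bool → Bool → Bool → Bool) (x : ZMod n → Bool) : Prop :=
  ∀ i : ZMod n, f (x (i - 1)) (x i) (x (i + 1)) = x i

/-- One full sequential step under the sequential update mode `μ`
(a permutation of the cells): update cells one at a time in the order
`μ 0, μ 1, …, μ (n-1)`. -/
def seqStep (n : ℕ) (f : Bool → Bool → Bool → Bool) (μ : Fin n ≃ ZMod n)
    (x : ZMod n → Bool) : ZMod n → Bool :=
  (List.finRange n).foldl (fun y k => eupdate n f y (μ k)) x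

/-- One full sequential step under the descending order `(n-1, n-2, …, 0)`. -/
def seqStepDesc (n : ℕ) (f : Bool → Bool → Bool → Bool) (x : ZMod n → Bool) : ZMod n → Bool :=
  ((List.range n).reverse).foldl (fun y k => eupdate n f y (k : ZMod n)) x

/-- One full sequential step under the ascending order `(0, 1, …, n-1)`. -/
def seqStepAsc (n : ℕ) (f : Bool → Bool → Bool → Bool) (x : ZMod n → Bool) : ZMod n → Bool :=
  (List.range n).foldl (fun y k => eupdate n f y (k : ZMod n)) x

def rule38 : Bool → Bool → Bool → Bool
  | true, true, true => false
  | true, true, false => false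
  | true, false, true => true
  | true, false, false => false
  | false, true, true => false
  | false, true, false => true
  | false, false, true => true
  | false, false, false => false

lemma rule38_mid_false {a c : Bool} (h : rule38 a false c = false) : c = false := by
  cases a <;> cases c <;> simp_all [rule38]

lemma rule38_mid_true {a c : Bool} (h : rule38 a true c = true) : a = false ∧ c = false := by
  cases a <;> cases c <;> simp_all [rule38]

theorem rule38_zero_isolated (n : ℕ) (hn : 2 ≤ n) :
    (∀ x : ZMod n → Bool, IsFixedConfig n rule38 x ↔ x = fun _ => false) ∧
    (∀ x : ZMod n → Bool, ∀ i : ZMod n,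
      (∃ j : ZMod n, x j = true) → ∃ j : ZMod n, (eupdate n rule38 x i) j = true) := by
  have hone : (1 : ZMod n) ≠ 0 := by
    haveI : Fact (1 < n) := ⟨by omega⟩
    exact one_ne_zero
  constructor
  · intro x
    constructor
    · intro hfix
      funext i
      by_contra hxi
      have hxi : x i = true := by cases h : x i <;> simp_all
      -- from fixed at i, x (i+1) = false
      have h1 : x (i + 1) = false := by
        have := hfix i
        rw [hxi] at this
        exact (rule38_mid_true this).2
      -- induction: x (i + 1 + k) = false for all nat k
      have key : ∀ k : ℕ, x (i + 1 + (k : ZMod n)) = false := by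
        intro k
        induction k with
        | zero => simpa using h1
        | succ m ih =>
          have hf := hfix (i + 1 + (m : ZMod n))
          rw [ih] at hf
          have := rule38_mid_false hf
          push_cast
          rw [show i + 1 + ((m : ZMod n) + 1) = i + 1 + (m : ZMod n) + 1 by ring]
          exact this
      have := key (n - 1)
      have hcast : i + 1 + ((n - 1 : ℕ) : ZMod n) = i := by
        have : ((n : ℕ) : ZMod n) = 0 := ZMod.natCast_self n
        have h2 : (1 : ZMod n) + ((n - 1 : ℕ) : ZMod n) = ((n : ℕ) : ZMod n) := by
          rw [show (1 : ZMod n) = ((1 : ℕ) : ZMod n) by push_cast; ring]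
          rw [← Nat.cast_add]
          congr 1
          omega
        rw [add_assoc, h2, this, add_zero]
      rw [hcast] at this
      rw [this] at hxi
      exact Bool.false_ne_true hxi
    · intro hx
      subst hx
      intro i
      rfl
  · intro x i ⟨j, hj⟩
    by_cases hji : j = i
    · subst hji
      -- x j = true
      by_cases hval : rule38 (x (j - 1)) (x j) (x (j + 1)) = true
      · exact ⟨j, by simp [eupdate, Function.update, hval]⟩
      · have hval' : rule38 (x (j - 1)) true (x (j + 1)) = false := by
          rw [← hj]; cases h : rule38 (x (j - 1)) (x j) (x (j + 1)) <;> simp_all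
        -- then x(j-1) = true or x(j+1) = true
        have : x (j - 1) = true ∨ x (j + 1) = true := by
          cases h1 : x (j - 1) <;> cases h2 : x (j + 1) <;> simp_all [rule38]
        rcases this with h | h
        · refine ⟨j - 1, ?_⟩
          have : j - 1 ≠ j := by
            intro heq
            apply hone
            have := sub_eq_iff_eq_add.mp heq
            linear_combination -this
          simp [eupdate, Function.update, this, h]
        · refine ⟨j + 1, ?_⟩
          have : j + 1 ≠ j := by
            intro heq
            apply hone
            linear_combination heq
          simp [eupdate, Function.update, this, h]
    · exact ⟨j, by simp [eupdate, Function.update, hji, hj]⟩
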